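/- For every integer k ≥ 1, (k+1)·∑_{i=1}^{k-1} ∑_{j=i}^{k} C(k+i,j) + (k+1)·2^{k+1} = (3k+1)·C(2k,k). Equivalently, ∑_{i=1}^{k-1} ∑_{j=i}^{k} C(k+i,j) = (3k+1)/(k+1)·C(2k,k) − 2^{k+1}. -/

import Mathlib

open Finset

private lemma two_pow_sum (n : ℕ) : (∑ i ∈ Finset.range n, 2 ^ i) + 1 = 2 ^ n := by
  induction n with
  | zero => simp
  | succ n ih => rw [Finset.sum_range_succ, pow_succ]; omega

/-- symmetry of binomial tails -/
private lemma sym_tail (n t : ℕ) (h : t ≤ n) :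
    ∑ j ∈ Finset.Icc (n - t + 1) n, Nat.choose n j
      = ∑ j ∈ Finset.range t, Nat.choose n j := by
  refine Finset.sum_nbij' (fun j => n - j) (fun j => n - j) ?_ ?_ ?_ ?_ ?_
  · intro a ha; simp only [Finset.mem_Icc] at ha; simp only [Finset.mem_range]; omega
  · intro a ha; simp only [Finset.mem_range] at ha; simp only [Finset.mem_Icc]; omega
  · intro a ha; simp only [Finset.mem_Icc] at ha; omega
  · intro a ha; simp only [Finset.mem_range] at ha; omega
  · intro a ha; simp only [Finset.mem_Icc] at ha
    rw [Nat.choose_symm (by omega)]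

/-- per-row symmetry identity -/
private lemma rowA (k i : ℕ) (h1 : 1 ≤ i) (h2 : i ≤ k) :
    (∑ j ∈ Finset.Icc i k, Nat.choose (k + i) j)
      + 2 * (∑ j ∈ Finset.range i, Nat.choose (k + i) j) = 2 ^ (k + i) := by
  have hsplit : (∑ j ∈ Finset.range i, Nat.choose (k + i) j)
      + (∑ j ∈ Finset.Icc i k, Nat.choose (k + i) j)
      + (∑ j ∈ Finset.Icc (k + 1) (k + i), Nat.choose (k + i) j) = 2 ^ (k + i) := by
    rw [← Nat.sum_range_choose (k + i), Finset.range_eq_Ico]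
    have e1 : Finset.Icc i k = Finset.Ico i (k + 1) := by rw [Finset.Ico_add_one_right_eq_Icc]
    have e2 : Finset.Icc (k + 1) (k + i) = Finset.Ico (k + 1) (k + i + 1) := by
      rw [Finset.Ico_add_one_right_eq_Icc]
    rw [e1, e2, Finset.sum_Ico_consecutive _ (by omega) (by omega : i ≤ k + 1),
      Finset.sum_Ico_consecutive _ (by omega : (0:ℕ) ≤ k + 1) (by omega), Finset.range_eq_Ico]
  have htail : ∑ j ∈ Finset.Icc (k + 1) (k + i), Nat.choose (k + i) j
      = ∑ j ∈ Finset.range i, Nat.choose (k + i) j := by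
    have := sym_tail (k + i) i (by omega)
    have e : k + i - i + 1 = k + 1 := by omega
    rwa [e] at this
  omega

/-- central symmetry: 2·∑_{j<k} C(2k,j) + C(2k,k) = 2^{2k} -/
private lemma central (k : ℕ) :
    2 * (∑ j ∈ Finset.range k, Nat.choose (2 * k) j) + Nat.choose (2 * k) k
      = 2 ^ (2 * k) := by
  have hsplit : (∑ j ∈ Finset.range k, Nat.choose (2 * k) j)
      + Nat.choose (2 * k) k
      + (∑ j ∈ Finset.Icc (k + 1) (2 * k), Nat.choose (2 * k) j) = 2 ^ (2 * k) := by
    rw [← Nat.sum_range_choose (2 * k), Finset.range_eq_Ico]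
    have e2 : Finset.Icc (k + 1) (2 * k) = Finset.Ico (k + 1) (2 * k + 1) := by
      rw [Finset.Ico_add_one_right_eq_Icc]
    have e3 : Nat.choose (2 * k) k = ∑ j ∈ Finset.Ico k (k + 1), Nat.choose (2 * k) j := by
      simp
    rw [e2, e3, Finset.sum_Ico_consecutive _ (by omega : (0:ℕ) ≤ k) (by omega : k ≤ k + 1),
      Finset.sum_Ico_consecutive _ (by omega : (0:ℕ) ≤ k + 1) (by omega), Finset.range_eq_Ico]
  have htail : ∑ j ∈ Finset.Icc (k + 1) (2 * k), Nat.choose (2 * k) j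
      = ∑ j ∈ Finset.range k, Nat.choose (2 * k) j := by
    have := sym_tail (2 * k) k (by omega)
    have e : 2 * k - k + 1 = k + 1 := by omega
    rwa [e] at this
  omega

/-- hockey-stick per column -/
private lemma colF (k j : ℕ) (h : j + 1 ≤ k) :
    Nat.choose (k + j + 1) (j + 1)
      + (∑ n ∈ Finset.Icc (k + j + 1) (2 * k - 1), Nat.choose n j)
      = Nat.choose (2 * k) (j + 1) := by
  have h1 : ∑ n ∈ Finset.Icc j (2 * k - 1), Nat.choose n j = Nat.choose (2 * k) (j + 1) := by
    have := Nat.sum_Icc_choose (2 * k - 1) j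
    rwa [show 2 * k - 1 + 1 = 2 * k by omega] at this
  have h2 : ∑ n ∈ Finset.Icc j (k + j), Nat.choose n j = Nat.choose (k + j + 1) (j + 1) :=
    Nat.sum_Icc_choose (k + j) j
  have hsplit : (∑ n ∈ Finset.Icc j (k + j), Nat.choose n j)
      + (∑ n ∈ Finset.Icc (k + j + 1) (2 * k - 1), Nat.choose n j)
      = ∑ n ∈ Finset.Icc j (2 * k - 1), Nat.choose n j := by
    rw [show Finset.Icc j (k + j) = Finset.Ico j (k + j + 1) by rw [Finset.Ico_add_one_right_eq_Icc],
        show Finset.Icc (k + j + 1) (2 * k - 1) = Finset.Ico (k + j + 1) (2 * k - 1 + 1) by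
          rw [Finset.Ico_add_one_right_eq_Icc],
        show Finset.Icc j (2 * k - 1) = Finset.Ico j (2 * k - 1 + 1) by rw [Finset.Ico_add_one_right_eq_Icc]]
    exact Finset.sum_Ico_consecutive _ (by omega) (by omega)
  omega

/-- For every integer `k ≥ 1`,
`(k+1) · ∑_{i=1}^{k-1} ∑_{j=i}^{k} C(k+i, j) + (k+1) · 2^{k+1} = (3k+1) · C(2k, k)`. -/
theorem sum_valid_words_eval (k : ℕ) (hk : 1 ≤ k) :
    (k + 1) * (∑ i ∈ Finset.Icc 1 (k - 1), ∑ j ∈ Finset.Icc i k, Nat.choose (k + i) j)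
      + (k + 1) * 2 ^ (k + 1)
    = (3 * k + 1) * Nat.choose (2 * k) k := by
  set T := ∑ i ∈ Finset.Icc 1 (k - 1), ∑ j ∈ Finset.Icc i k, Nat.choose (k + i) j with hT
  set B := ∑ i ∈ Finset.Icc 1 (k - 1), ∑ j ∈ Finset.range i, Nat.choose (k + i) j with hB
  set R := ∑ j ∈ Finset.range k, Nat.choose (2 * k) j with hR
  set C1 := Nat.choose (2 * k) k with hC1
  set C2 := Nat.choose (2 * k) (k - 1) with hC2
  -- E1 : T + 2 * B + 2^(k+1) = 2^(2k)
  have E1 : T + 2 * B + 2 ^ (k + 1) = 2 ^ (2 * k) := by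
    have hrow : T + 2 * B = ∑ i ∈ Finset.Icc 1 (k - 1), 2 ^ (k + i) := by
      rw [hT, hB, Finset.mul_sum, ← Finset.sum_add_distrib]
      refine Finset.sum_congr rfl ?_
      intro i hi
      simp only [Finset.mem_Icc] at hi
      exact rowA k i hi.1 (by omega)
    have hgeom : (∑ i ∈ Finset.Icc 1 (k - 1), 2 ^ (k + i)) + 2 ^ (k + 1) = 2 ^ (2 * k) := by
      have hre : ∑ i ∈ Finset.Icc 1 (k - 1), 2 ^ (k + i)
          = ∑ i ∈ Finset.range (k - 1), 2 ^ (k + 1) * 2 ^ i := by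
        refine Finset.sum_nbij' (fun i => i - 1) (fun i => i + 1) ?_ ?_ ?_ ?_ ?_
        · intro a ha; simp only [Finset.mem_Icc] at ha; simp only [Finset.mem_range]; omega
        · intro a ha; simp only [Finset.mem_range] at ha; simp only [Finset.mem_Icc]; omega
        · intro a ha; simp only [Finset.mem_Icc] at ha; omega
        · intro a ha; omega
        · intro a ha; simp only [Finset.mem_Icc] at ha
          rw [← pow_add]
          congr 1
          omega
      rw [hre, ← Finset.mul_sum]
      have h2 := two_pow_sum (k - 1)
      have : 2 ^ (k + 1) * 2 ^ (k - 1) = 2 ^ (2 * k) := by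
        rw [← pow_add]; congr 1; omega
      calc 2 ^ (k + 1) * (∑ i ∈ Finset.range (k - 1), 2 ^ i) + 2 ^ (k + 1)
          = 2 ^ (k + 1) * ((∑ i ∈ Finset.range (k - 1), 2 ^ i) + 1) := by ring
        _ = 2 ^ (k + 1) * 2 ^ (k - 1) := by rw [h2]
        _ = 2 ^ (2 * k) := this
    omega
  -- E2 : B + C2 = R
  have E2 : B + C2 = R := by
    -- swap the double sum
    have hswap : B = ∑ j ∈ Finset.range (k - 1), ∑ i ∈ Finset.Icc (j + 1) (k - 1),
        Nat.choose (k + i) j := by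
      rw [hB]
      refine Finset.sum_comm' ?_
      intro i j
      simp only [Finset.mem_Icc, Finset.mem_range]
      omega
    -- reindex inner sum over n = k + i
    have hinner : ∀ j ∈ Finset.range (k - 1),
        ∑ i ∈ Finset.Icc (j + 1) (k - 1), Nat.choose (k + i) j
          = ∑ n ∈ Finset.Icc (k + j + 1) (2 * k - 1), Nat.choose n j := by
      intro j hj
      refine Finset.sum_nbij' (fun i => k + i) (fun n => n - k) ?_ ?_ ?_ ?_ ?_
      · intro a ha; simp only [Finset.mem_Icc] at ha ⊢; omega
      · intro a ha; simp only [Finset.mem_Icc] at ha ⊢; omega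
      · intro a ha; omega
      · intro a ha; simp only [Finset.mem_Icc] at ha; omega
      · intro a ha; rfl
    have hBsum : B + (∑ j ∈ Finset.range (k - 1), Nat.choose (k + j + 1) (j + 1))
        = ∑ j ∈ Finset.range (k - 1), Nat.choose (2 * k) (j + 1) := by
      rw [hswap, Finset.sum_congr rfl hinner, ← Finset.sum_add_distrib]
      refine Finset.sum_congr rfl ?_
      intro j hj
      simp only [Finset.mem_range] at hj
      have := colF k j (by omega)
      omega
    -- ∑_{j<k-1} C(k+j+1, j+1) + 1 = C2
    have hF3 : (∑ j ∈ Finset.range (k - 1), Nat.choose (k + j + 1) (j + 1)) + 1 = C2 := by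
      have hre : ∑ j ∈ Finset.range (k - 1), Nat.choose (k + j + 1) (j + 1)
          = ∑ n ∈ Finset.Icc (k + 1) (2 * k - 1), Nat.choose n k := by
        refine Finset.sum_nbij' (fun j => k + j + 1) (fun n => n - k - 1) ?_ ?_ ?_ ?_ ?_
        · intro a ha; simp only [Finset.mem_range] at ha; simp only [Finset.mem_Icc]; omega
        · intro a ha; simp only [Finset.mem_Icc] at ha; simp only [Finset.mem_range]; omega
        · intro a ha; omega
        · intro a ha; simp only [Finset.mem_Icc] at ha; omega
        · intro a ha
          rw [← Nat.choose_symm (show a + 1 ≤ k + a + 1 by omega)]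
          congr 1
          omega
      have hhockey : ∑ n ∈ Finset.Icc k (2 * k - 1), Nat.choose n k
          = Nat.choose (2 * k) (k + 1) := by
        have := Nat.sum_Icc_choose (2 * k - 1) k
        rwa [show 2 * k - 1 + 1 = 2 * k by omega] at this
      have hsplit : Nat.choose k k + (∑ n ∈ Finset.Icc (k + 1) (2 * k - 1), Nat.choose n k)
          = ∑ n ∈ Finset.Icc k (2 * k - 1), Nat.choose n k := by
        rw [show (Nat.choose k k : ℕ)
              = ∑ n ∈ Finset.Ico k (k + 1), Nat.choose n k by simp,
            show Finset.Icc (k + 1) (2 * k - 1) = Finset.Ico (k + 1) (2 * k - 1 + 1) by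
              rw [Finset.Ico_add_one_right_eq_Icc],
            show Finset.Icc k (2 * k - 1) = Finset.Ico k (2 * k - 1 + 1) by
              rw [Finset.Ico_add_one_right_eq_Icc]]
        exact Finset.sum_Ico_consecutive _ (by omega) (by omega)
      have hsym : Nat.choose (2 * k) (k + 1) = C2 := by
        rw [hC2, ← Nat.choose_symm (by omega : k + 1 ≤ 2 * k)]
        congr 1
        omega
      simp only [Nat.choose_self] at hsplit
      omega
    -- ∑_{j<k-1} C(2k, j+1) + 1 = R
    have hF4 : (∑ j ∈ Finset.range (k - 1), Nat.choose (2 * k) (j + 1)) + 1 = R := by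
      rw [hR, show k = (k - 1) + 1 by omega, Finset.sum_range_succ']
      simp [add_comm]
    omega
  -- E3 : 2R + C1 = 2^(2k)
  have E3 : 2 * R + C1 = 2 ^ (2 * k) := central k
  -- key : T + 2^(k+1) = C1 + 2*C2
  have key : T + 2 ^ (k + 1) = C1 + 2 * C2 := by omega
  -- (k+1)*C2 = k*C1
  have hmul : (k + 1) * C2 = k * C1 := by
    have := Nat.choose_succ_right_eq (2 * k) (k - 1)
    rw [show k - 1 + 1 = k by omega, show 2 * k - (k - 1) = k + 1 by omega] at this
    rw [hC1, hC2]
    linarith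
  calc (k + 1) * T + (k + 1) * 2 ^ (k + 1)
      = (k + 1) * (T + 2 ^ (k + 1)) := by ring
    _ = (k + 1) * (C1 + 2 * C2) := by rw [key]
    _ = (k + 1) * C1 + 2 * ((k + 1) * C2) := by ring
    _ = (k + 1) * C1 + 2 * (k * C1) := by rw [hmul]
    _ = (3 * k + 1) * C1 := by ring
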